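/- Let G be a finite simple connected graph, d ≥ 1 an integer, and u a vertex of G with 1 ≤ deg(u) ≤ d whose neighborhood N(u) is monochromatic. Then ({u}, V(G) ∖ {u}) is a minimal d-cut of G, and it is the only minimal d-cut of G whose edge cut contains an edge incident with u; that is, every minimal d-cut whose edge cut contains an edge incident with u has edge cut exactly {uw : w ∈ N(u)}. -/
import Mathlib


variable {V : Type*}

/-- A `d`-cut of a simple graph `G`: a partition `(A, B)` of the vertex set into two
nonempty parts such that every vertex of `A` has at most `d` neighbors in `B` and
every vertex of `B` has at most `d` neighbors in `A`. -/
def IsDCut (G : SimpleGraph V) (d : ℕ) (A B : Set V) : Prop :=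
  A.Nonempty ∧ B.Nonempty ∧ Disjoint A B ∧ A ∪ B = Set.univ ∧
    (∀ v ∈ A, (G.neighborSet v ∩ B).ncard ≤ d) ∧
    (∀ v ∈ B, (G.neighborSet v ∩ A).ncard ≤ d)

/-- A vertex set `T` is monochromatic if every `d`-cut of `G` has `T` entirely on one side. -/
def Monochromatic (G : SimpleGraph V) (d : ℕ) (T : Set V) : Prop :=
  ∀ A B : Set V, IsDCut G d A B → T ⊆ A ∨ T ⊆ B

/-- The edge cut of a cut `(A, B)`: the set of edges of `G` with one endpoint in `A`
and the other endpoint in `B`. -/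
def edgeCut (G : SimpleGraph V) (A B : Set V) : Set (Sym2 V) :=
  {e | e ∈ G.edgeSet ∧ ∃ u v, e = s(u, v) ∧ u ∈ A ∧ v ∈ B}

/-- A minimal `d`-cut: no `d`-cut has an edge cut that is a proper subset of its edge cut. -/
def IsMinimalDCut (G : SimpleGraph V) (d : ℕ) (A B : Set V) : Prop :=
  IsDCut G d A B ∧ ∀ A' B' : Set V, IsDCut G d A' B' → ¬ edgeCut G A' B' ⊂ edgeCut G A B

/-- A maximal `d`-cut: no `d`-cut has an edge cut that properly contains its edge cut. -/
def IsMaximalDCut (G : SimpleGraph V) (d : ℕ) (A B : Set V) : Prop :=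
  IsDCut G d A B ∧ ∀ A' B' : Set V, IsDCut G d A' B' → ¬ edgeCut G A B ⊂ edgeCut G A' B'

/-- Across any connected partition there is a crossing edge. -/
lemma exists_cross_edge {G : SimpleGraph V} {A B : Set V}
    (hA : Disjoint A B) (hcov : A ∪ B = Set.univ) (hconn : G.Connected)
    {a b : V} (ha : a ∈ A) (hb : b ∈ B) :
    (edgeCut G A B).Nonempty := by
  obtain ⟨p⟩ := hconn a b
  clear hconn
  induction p with
  | nil => exact absurd hb (Set.disjoint_left.mp hA ha)
  | @cons x y z h p ih =>
      by_cases hy : y ∈ A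
      · exact ih hy hb
      · have hyB : y ∈ B := by
          have : y ∈ A ∪ B := by rw [hcov]; trivial
          exact this.resolve_left hy
        exact ⟨s(x, y), ⟨h, x, y, rfl, ha, hyB⟩⟩

lemma edgeCut_singleton (G : SimpleGraph V) (u : V) :
    edgeCut G {u} {u}ᶜ = {e | e ∈ G.edgeSet ∧ u ∈ e} := by
  ext e
  constructor
  · rintro ⟨hes, a, b, rfl, ha, _⟩
    rcases ha with rfl
    exact ⟨hes, Sym2.mem_mk_left _ _⟩
  · rintro ⟨hes, hue⟩
    obtain ⟨w, rfl⟩ := Sym2.mem_iff_exists.mp hue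
    have hadj : G.Adj u w := hes
    exact ⟨hes, u, w, rfl, rfl, fun h => hadj.ne (h.symm)⟩

/-- The singleton cut at a vertex of positive degree ≤ d is a d-cut. -/
lemma singleton_isDCut [Fintype V] (G : SimpleGraph V) (d : ℕ) (hd : 1 ≤ d) (u : V)
    (h1 : (G.neighborSet u).Nonempty) (h2 : (G.neighborSet u).ncard ≤ d) :
    IsDCut G d {u} {u}ᶜ := by
  obtain ⟨w, hw⟩ := h1
  refine ⟨⟨u, rfl⟩, ⟨w, fun h => (G.ne_of_adj hw) (by simpa using h.symm)⟩,
    disjoint_compl_right, Set.union_compl_self _, ?_, ?_⟩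
  · rintro v rfl
    have : G.neighborSet v ∩ {v}ᶜ = G.neighborSet v := by
      apply Set.inter_eq_left.mpr
      intro x hx
      exact fun h => (G.ne_of_adj hx) (by simpa using h.symm)
    rw [this]; exact h2
  · intro v _
    calc (G.neighborSet v ∩ {u}).ncard ≤ ({u} : Set V).ncard :=
          Set.ncard_le_ncard Set.inter_subset_right (Set.toFinite _)
      _ = 1 := Set.ncard_singleton u
      _ ≤ d := hd

/-- Dichotomy: for any d-cut, either all edges at `u` cross, or none does. -/
lemma dichotomy (G : SimpleGraph V) (d : ℕ) (u : V)
    (hmono : Monochromatic G d (G.neighborSet u)) {A B : Set V} (h : IsDCut G d A B) :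
    {e | e ∈ G.edgeSet ∧ u ∈ e} ⊆ edgeCut G A B ∨ ∀ e ∈ edgeCut G A B, u ∉ e := by
  have hN := hmono A B h
  obtain ⟨_, _, hdisj, hcov, _, _⟩ := h
  have huAB : u ∈ A ∪ B := by rw [hcov]; trivial
  rcases huAB with huA | huB
  · rcases hN with hNA | hNB
    · -- u ∈ A, N(u) ⊆ A : no cross edge at u
      right
      rintro e ⟨hes, a, b, rfl, haA, hbB⟩ hue
      rcases Sym2.mem_iff.mp hue with rfl | rfl
      · have hbN : b ∈ G.neighborSet u := hes
        exact Set.disjoint_left.mp hdisj (hNA hbN) hbB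
      · exact Set.disjoint_left.mp hdisj huA hbB
    · -- u ∈ A, N(u) ⊆ B : all edges at u cross
      left
      rintro e ⟨hes, hue⟩
      obtain ⟨w, rfl⟩ := Sym2.mem_iff_exists.mp hue
      exact ⟨hes, u, w, rfl, huA, hNB hes⟩
  · rcases hN with hNA | hNB
    · -- u ∈ B, N(u) ⊆ A : all edges at u cross
      left
      rintro e ⟨hes, hue⟩
      obtain ⟨w, rfl⟩ := Sym2.mem_iff_exists.mp hue
      have hwA : w ∈ A := hNA hes
      exact ⟨hes, w, u, Sym2.eq_swap, hwA, huB⟩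
    · -- u ∈ B, N(u) ⊆ B : no cross edge at u
      right
      rintro e ⟨hes, a, b, rfl, haA, hbB⟩ hue
      rcases Sym2.mem_iff.mp hue with rfl | rfl
      · exact Set.disjoint_left.mp hdisj haA huB
      · have haN : a ∈ G.neighborSet u := (SimpleGraph.mem_edgeSet G).mp hes |>.symm
        exact Set.disjoint_left.mp hdisj haA (hNB haN)

/-- In a connected graph, if `u` has `1 ≤ deg(u) ≤ d` and its neighborhood is
monochromatic, then `({u}, V ∖ {u})` is a minimal `d`-cut, and every minimal `d`-cut
whose edge cut contains an edge incident with `u` has edge cut exactly the set of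
edges incident with `u`. -/
theorem low_degree_mono_neighborhood_minimal [Fintype V] (G : SimpleGraph V) (d : ℕ)
    (hd : 1 ≤ d) (hconn : G.Connected) (u : V)
    (h1 : (G.neighborSet u).Nonempty) (h2 : (G.neighborSet u).ncard ≤ d)
    (hmono : Monochromatic G d (G.neighborSet u)) :
    IsMinimalDCut G d {u} {u}ᶜ ∧
    (∀ A B : Set V, IsMinimalDCut G d A B → (∃ e ∈ edgeCut G A B, u ∈ e) →
      edgeCut G A B = {e | e ∈ G.edgeSet ∧ u ∈ e}) := by
  have hcut := singleton_isDCut G d hd u h1 h2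
  have hE := edgeCut_singleton G u
  have hmin : IsMinimalDCut G d {u} {u}ᶜ := by
    refine ⟨hcut, ?_⟩
    intro A' B' h' hsub
    rw [hE] at hsub
    rcases dichotomy G d u hmono h' with hall | hnone
    · exact hsub.2 hall
    · have hempty : edgeCut G A' B' = ∅ := by
        ext e
        simp only [Set.mem_empty_iff_false, iff_false]
        intro he
        exact hnone e he (hsub.1 he).2
      obtain ⟨a, haA⟩ := h'.1
      obtain ⟨b, hbB⟩ := h'.2.1
      obtain ⟨e, he⟩ := exists_cross_edge h'.2.2.1 h'.2.2.2.1 hconn haA hbB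
      rw [hempty] at he
      exact he
  refine ⟨hmin, ?_⟩
  intro A B hm hex
  rcases dichotomy G d u hmono hm.1 with hall | hnone
  · by_contra hne
    have hss : edgeCut G {u} {u}ᶜ ⊂ edgeCut G A B := by
      rw [hE]
      exact Set.ssubset_iff_subset_ne.mpr ⟨hall, fun h => hne h.symm⟩
    exact hm.2 {u} {u}ᶜ hcut hss
  · obtain ⟨e, heC, hue⟩ := hex
    exact absurd hue (hnone e heC)
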